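/- Let X be a real Hausdorff topological vector space, D ⊆ X a nonempty convex set, n a natural number, k ∈ {1,…,n}, χ : {1,…,k} → {1,…,n} an injective map, and E₁,…,Eₙ generalized deviation functions on D. Then the generalized deviation mean D^E : Dⁿ → D is uniquely χ-reducible and its χ-reduction is the generalized deviation mean generated by E_χ = (E_{χ(1)},…,E_{χ(k)}): for every x ∈ Dᵏ, the point y = D^{E_χ}(x) is the unique solution y ∈ conv{x₁,…,x_k} of the equation D^E((x|χ)(y)) = y. -/

import Mathlib

/-- The generalized deviation mean `D^E` is uniquely χ-reducible with
χ-reduction `D^{E_χ}`: for `x ∈ Dᵏ`, the point `y₀ = D^{E_χ}(x)` is the unique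
`y ∈ conv{x₁,…,x_k}` satisfying `D^E((x|χ)(y)) = y`. -/
theorem generalized_deviation_mean_chi_reduction
    {X : Type*} [AddCommGroup X] [Module ℝ X] [TopologicalSpace X]
    [IsTopologicalAddGroup X] [ContinuousSMul ℝ X] [T2Space X]
    (D : Set X) (hD : D.Nonempty) (hDconv : Convex ℝ D)
    (n k : ℕ) (hk : 0 < k) (hkn : k ≤ n)
    (χ : Fin k → Fin n) (hχ : Function.Injective χ)
    (E : Fin n → X → X → X →L[ℝ] ℝ)
    (hE0 : ∀ i, ∀ u ∈ D, E i u u = 0)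
    (hEcont : ∀ i, ∀ u ∈ D, ∀ h : X, ContinuousOn (fun v => E i u v h) D)
    (hEmono : ∀ i, ∀ u ∈ D, ∀ v ∈ D, ∀ w ∈ D, v ≠ w → (E i u v - E i u w) (v - w) < 0)
    (x : Fin k → X) (hx : ∀ j, x j ∈ D)
    (y₀ : X)
    -- `y₀ = D^{E_χ}(x)`:
    (hy₀mem : y₀ ∈ convexHull ℝ (Set.range x))
    (hy₀ineq : ∀ j, (∑ j', E (χ j') (x j') y₀) (x j - y₀) ≤ 0) :
    -- `y₀` solves `D^E((x|χ)(y₀)) = y₀` …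
    (y₀ ∈ convexHull ℝ (Set.range (Function.extend χ x fun _ => y₀)) ∧
      ∀ i, (∑ i', E i' (Function.extend χ x (fun _ => y₀) i') y₀)
        (Function.extend χ x (fun _ => y₀) i - y₀) ≤ 0) ∧
    -- … and it is the unique such point in `conv{x₁,…,x_k}`:
    ∀ y ∈ convexHull ℝ (Set.range x),
      (y ∈ convexHull ℝ (Set.range (Function.extend χ x fun _ => y)) ∧
        ∀ i, (∑ i', E i' (Function.extend χ x (fun _ => y) i') y)
          (Function.extend χ x (fun _ => y) i - y) ≤ 0) → y = y₀ := by
  classical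
  -- membership of the convex hull of the range of x in D
  have hxD : ∀ y ∈ convexHull ℝ (Set.range x), y ∈ D := fun y hy =>
    convexHull_min (Set.range_subset_iff.mpr hx) hDconv hy
  have hy₀D : y₀ ∈ D := hxD y₀ hy₀mem
  -- key sum identity
  have hsum : ∀ y ∈ D, (∑ i' : Fin n, E i' (Function.extend χ x (fun _ => y) i') y)
      = ∑ j' : Fin k, E (χ j') (x j') y := by
    intro y hyD
    have hsplit := Finset.sum_add_sum_compl (Finset.univ.image χ)
      (fun i' : Fin n => E i' (Function.extend χ x (fun _ => y) i') y)
    have h1 : ∑ i' ∈ (Finset.univ.image χ)ᶜ,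
        E i' (Function.extend χ x (fun _ => y) i') y = 0 := by
      apply Finset.sum_eq_zero
      intro i hi
      have hni : ¬ ∃ j, χ j = i := by
        simpa [Finset.mem_compl, Finset.mem_image] using hi
      rw [Function.extend_apply' _ _ _ hni]
      exact hE0 i y hyD
    have h2 : ∑ i' ∈ Finset.univ.image χ,
        E i' (Function.extend χ x (fun _ => y) i') y
        = ∑ j' : Fin k, E (χ j') (x j') y := by
      rw [Finset.sum_image (fun a _ b _ h => hχ h)]
      exact Finset.sum_congr rfl fun j _ => by rw [hχ.extend_apply]
    rw [← hsplit, h1, h2, add_zero]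
  -- a convex "half-space" fact
  have hhalf : ∀ (f : X →L[ℝ] ℝ) (c : X), (∀ j, f (x j - c) ≤ 0) →
      ∀ y ∈ convexHull ℝ (Set.range x), f (y - c) ≤ 0 := by
    intro f c hf y hy
    have hconv : Convex ℝ {z : X | f (z - c) ≤ 0} := by
      intro z hz w hw a b ha hb hab
      simp only [Set.mem_setOf_eq] at hz hw ⊢
      have key : a • z + b • w - c = a • (z - c) + b • (w - c) := by
        calc a • z + b • w - c = a • z + b • w - (a + b) • c := by rw [hab, one_smul]
          _ = a • (z - c) + b • (w - c) := by
              rw [add_smul, smul_sub, smul_sub]; abel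
      rw [key, map_add, f.map_smul, f.map_smul]
      simp only [smul_eq_mul]
      nlinarith
    exact convexHull_min (Set.range_subset_iff.mpr hf) hconv hy
  refine ⟨⟨convexHull_mono ?_ hy₀mem, ?_⟩, ?_⟩
  · -- range x ⊆ range (extend χ x (fun _ => y₀))
    rintro _ ⟨j, rfl⟩
    exact ⟨χ j, hχ.extend_apply _ _ _⟩
  · -- the inequalities at y₀
    intro i
    rw [hsum y₀ hy₀D]
    by_cases hi : ∃ j, χ j = i
    · obtain ⟨j, rfl⟩ := hi
      rw [hχ.extend_apply]
      exact hy₀ineq j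
    · rw [Function.extend_apply' _ _ _ hi, sub_self, map_zero]
  · -- uniqueness
    intro y hy ⟨hymem, hyineq⟩
    have hyD : y ∈ D := hxD y hy
    by_contra hne
    -- inequalities for y in reduced form
    have hSy : ∀ j, (∑ j' : Fin k, E (χ j') (x j') y) (x j - y) ≤ 0 := by
      intro j
      have := hyineq (χ j)
      rwa [hsum y hyD, hχ.extend_apply] at this
    have hA : (∑ j' : Fin k, E (χ j') (x j') y₀) (y - y₀) ≤ 0 :=
      hhalf _ _ hy₀ineq y hy
    have hB : (∑ j' : Fin k, E (χ j') (x j') y) (y₀ - y) ≤ 0 :=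
      hhalf _ _ hSy y₀ hy₀mem
    have hC : ∑ j' : Fin k,
        ((E (χ j') (x j') y - E (χ j') (x j') y₀) (y - y₀)) < 0 := by
      apply Finset.sum_neg
      · intro j _
        exact hEmono (χ j) (x j) (hx j) y hyD y₀ hy₀D hne
      · exact Finset.univ_nonempty_iff.mpr (Fin.pos_iff_nonempty.mp hk)
    have hEq : ∑ j' : Fin k, ((E (χ j') (x j') y - E (χ j') (x j') y₀) (y - y₀))
        = (∑ j' : Fin k, E (χ j') (x j') y) (y - y₀)
          - (∑ j' : Fin k, E (χ j') (x j') y₀) (y - y₀) := by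
      simp [ContinuousLinearMap.sub_apply, ContinuousLinearMap.sum_apply,
        Finset.sum_sub_distrib]
    have hB' : -(∑ j' : Fin k, E (χ j') (x j') y) (y - y₀) ≤ 0 := by
      rw [← map_neg, neg_sub]; exact hB
    linarith [hEq ▸ hC]
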